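/- arXiv:1205.5663 — 2 statements merged into one kernel-verified Lean document; each statement's English description precedes it below -/
import Mathlib

section
/- Let α be a real algebraic number of degree at least three over ℚ. Then for every k > 1 and every s > 2, lim_{N→∞} log(Z_N(α, α², s))/(s N^k) = 0; that is, the pair (α, α²) has a k-free energy limit equal to zero for every k > 1. -/
open Matrix Filter

noncomputable section

/-- The matrix `A₀` with rows (0,0,1), (1,0,−1), (0,1,0). -/
def A0 : Matrix (Fin 3) (Fin 3) ℝ := !![0,0,1; 1,0,-1; 0,1,0]

/-- The matrix `A₁` with rows (1,0,0), (0,1,0), (−1,0,1). -/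
def A1 : Matrix (Fin 3) (Fin 3) ℝ := !![1,0,0; 0,1,0; -1,0,1]

/-- `Amat 0 = A₀`, `Amat 1 = A₁`. -/
def Amat : Fin 2 → Matrix (Fin 3) (Fin 3) ℝ := ![A0, A1]

/-- The matrix `M` with rows (0,0,1), (0,0,α), (0,0,β). -/
def Mmat (α β : ℝ) : Matrix (Fin 3) (Fin 3) ℝ := !![0,0,1; 0,0,α; 0,0,β]

/-- Hilbert–Schmidt (Hadamard) product `A*B = Tr(A Bᵀ)`. -/
def HS (A B : Matrix (Fin 3) (Fin 3) ℝ) : ℝ := (A * Bᵀ).trace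

/-- `A^I = A_{σ₁} A_{σ₂} ⋯ A_{σ_N}` for a state `I = (σ₁,…,σ_N) ∈ {0,1}^N`. -/
def AI {N : ℕ} (I : Fin N → Fin 2) : Matrix (Fin 3) (Fin 3) ℝ :=
  (List.ofFn fun i => Amat (I i)).prod

/-- The partition function `Z_N(α, β, s) = Σ_{I ∈ 𝒮_N} 1/|M*A^I|^s`. -/
def Z (N : ℕ) (α β s : ℝ) : ℝ :=
  ∑ I : Fin N → Fin 2, 1 / |HS (Mmat α β) (AI I)| ^ s
open IntermediateField Module
def Bmat : Fin 2 → Matrix (Fin 3) (Fin 3) ℤ :=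
  ![!![0,0,1; 1,0,-1; 0,1,0], !![1,0,0; 0,1,0; -1,0,1]]

def BI {N : ℕ} (I : Fin N → Fin 2) : Matrix (Fin 3) (Fin 3) ℤ :=
  (List.ofFn fun i => Bmat (I i)).prod

lemma Bmat_map (σ : Fin 2) : (Bmat σ).map (Int.cast : ℤ → ℝ) = Amat σ := by
  fin_cases σ <;>
    · ext i j
      fin_cases i <;> fin_cases j <;>
        simp [Bmat, Amat, A0, A1, Matrix.map_apply]

lemma AI_eq {N : ℕ} (I : Fin N → Fin 2) : AI I = (BI I).map (Int.cast : ℤ → ℝ) := by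
  have : (BI I).map (Int.cast : ℤ → ℝ)
      = (Int.castRingHom ℝ).mapMatrix (BI I) := rfl
  rw [this, BI, map_list_prod]
  rw [AI]
  congr 1
  rw [List.map_ofFn]
  congr 1
  ext i
  exact (Bmat_map (I i)).symm ▸ rfl

lemma Bmat_det (σ : Fin 2) : (Bmat σ).det = 1 := by
  fin_cases σ <;> simp [Bmat, Matrix.det_fin_three]

lemma BI_det {N : ℕ} (I : Fin N → Fin 2) : (BI I).det = 1 := by
  have h := map_list_prod (Matrix.detMonoidHom) (List.ofFn fun i => Bmat (I i))
  simp only [Matrix.coe_detMonoidHom] at h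
  rw [BI, h]
  apply List.prod_eq_one
  intro x hx
  rw [List.mem_map] at hx
  obtain ⟨M, hM, rfl⟩ := hx
  rw [List.mem_ofFn] at hM
  obtain ⟨i, rfl⟩ := hM
  exact Bmat_det (I i)

lemma BI_col_ne_zero {N : ℕ} (I : Fin N → Fin 2) : ¬ (∀ i, BI I i 2 = 0) := by
  intro h
  have h0 : (BI I).det = 0 := Matrix.det_eq_zero_of_column_eq_zero 2 h
  rw [BI_det] at h0
  exact one_ne_zero h0

lemma Bmat_mul_bound (σ : Fin 2) (C : Matrix (Fin 3) (Fin 3) ℤ) (m : ℤ)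
    (hC : ∀ i j, |C i j| ≤ m) : ∀ i j, |(Bmat σ * C) i j| ≤ 2 * m := by
  have hm : 0 ≤ m := le_trans (abs_nonneg _) (hC 0 0)
  intro i j
  have h0 := hC 0 j
  have h1 := hC 1 j
  have h2 := hC 2 j
  rw [abs_le] at h0 h1 h2
  fin_cases σ <;> fin_cases i <;>
    · simp only [Bmat, Matrix.mul_apply, Fin.sum_univ_three]
      simp
      rw [abs_le]
      constructor <;> linarith

lemma BI_bound {N : ℕ} (I : Fin N → Fin 2) : ∀ i j, |BI I i j| ≤ 2 ^ N := by
  induction N with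
  | zero =>
      intro i j
      simp only [BI, List.ofFn_zero, List.prod_nil, pow_zero]
      rcases eq_or_ne i j with h | h <;> simp [Matrix.one_apply, h]
  | succ n ih =>
      intro i j
      have hrec : BI I = Bmat (I 0) * BI (fun k => I k.succ) := by
        rw [BI, List.ofFn_succ, List.prod_cons]; rfl
      rw [hrec, pow_succ]
      have := Bmat_mul_bound (I 0) (BI (fun k => I k.succ)) (2 ^ n)
        (ih (fun k => I k.succ)) i j
      linarith

lemma HS_formula (α β : ℝ) (A : Matrix (Fin 3) (Fin 3) ℝ) :
    HS (Mmat α β) A = A 0 2 + α * A 1 2 + β * A 2 2 := by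
  simp [HS, Mmat, Matrix.trace, Matrix.diag, Matrix.mul_apply, Fin.sum_univ_three]


set_option maxHeartbeats 1000000 in
theorem liouville3 (α : ℝ) (hα : IsAlgebraic ℚ α) (hdeg : 3 ≤ (minpoly ℚ α).natDegree) :
    ∃ c : ℝ, 0 < c ∧ ∃ D : ℕ, ∀ p q r : ℤ, ¬(p = 0 ∧ q = 0 ∧ r = 0) →
      ∀ H : ℝ, 1 ≤ H → |(p:ℝ)| ≤ H → |(q:ℝ)| ≤ H → |(r:ℝ)| ≤ H →
      c / H ^ D ≤ |(p:ℝ) + q * α + r * α^2| := by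
  classical
  have hint : IsIntegral ℚ α := hα.isIntegral
  haveI : FiniteDimensional ℚ ℚ⟮α⟯ := IntermediateField.adjoin.finiteDimensional hint
  set K := ℚ⟮α⟯ with hK
  set θ : K := IntermediateField.AdjoinSimple.gen ℚ α with hθ
  have hθalgQ : IsAlgebraic ℚ θ := (IsAlgebraic.of_finite ℚ θ)
  have hθalgZ : IsAlgebraic ℤ θ := (IsFractionRing.isAlgebraic_iff ℤ ℚ K).mpr hθalgQ
  obtain ⟨m, hm0, hmint⟩ := hθalgZ.exists_integral_multiple
  -- m • θ is integral over ℤ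
  have hmθ : IsIntegral ℤ ((m : K) * θ) := by
    rw [← zsmul_eq_mul]; exact hmint
  -- the minimal polynomial of θ has degree ≥ 3
  have hθdeg : 3 ≤ (minpoly ℚ θ).natDegree := by
    rw [hθ]; convert hdeg using 2; exact IntermediateField.minpoly_gen ℚ α
  -- nonvanishing
  have hnv : ∀ p q r : ℤ, ¬(p = 0 ∧ q = 0 ∧ r = 0) →
      ((p:K) + (q:K) * θ + (r:K) * θ^2) ≠ 0 := by
    intro p q r hpqr h0
    set P : Polynomial ℚ := Polynomial.C (p:ℚ) + Polynomial.C (q:ℚ) * Polynomial.X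
      + Polynomial.C (r:ℚ) * Polynomial.X ^ 2 with hP
    have haev : Polynomial.aeval θ P = 0 := by
      simp only [hP, map_add, _root_.map_mul, Polynomial.aeval_C, Polynomial.aeval_X, map_pow]
      rw [show ((algebraMap ℚ K) (p:ℚ)) = (p:K) by push_cast; rfl,
        show ((algebraMap ℚ K) (q:ℚ)) = (q:K) by push_cast; rfl,
        show ((algebraMap ℚ K) (r:ℚ)) = (r:K) by push_cast; rfl]
      exact h0
    have hPne : P ≠ 0 := by
      intro hP0
      apply hpqr
      have h0' := congrArg (fun f => Polynomial.coeff f 0) hP0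
      have h1' := congrArg (fun f => Polynomial.coeff f 1) hP0
      have h2' := congrArg (fun f => Polynomial.coeff f 2) hP0
      simp only [hP, Polynomial.coeff_add, Polynomial.coeff_C, Polynomial.coeff_C_mul,
        Polynomial.coeff_X_zero, Polynomial.coeff_X_one, Polynomial.coeff_X, Polynomial.coeff_X_pow,
        Polynomial.coeff_zero] at h0' h1' h2'
      norm_num at h0' h1' h2'
      exact ⟨by exact_mod_cast h0', by exact_mod_cast h1', by exact_mod_cast h2'⟩
    have hdvd : minpoly ℚ θ ∣ P := minpoly.dvd ℚ θ haev
    have hle : (minpoly ℚ θ).natDegree ≤ P.natDegree :=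
      Polynomial.natDegree_le_of_dvd hdvd hPne
    have hPdeg : P.natDegree ≤ 2 := by
      apply Polynomial.natDegree_add_le_of_degree_le
      · apply Polynomial.natDegree_add_le_of_degree_le
        · exact le_trans (Polynomial.natDegree_C _).le (by norm_num)
        · exact le_trans (Polynomial.natDegree_C_mul_le _ _) (by simp)
      · exact le_trans (Polynomial.natDegree_C_mul_le _ _) (by simp [Polynomial.natDegree_X_pow])
    omega
  -- the distinguished real embedding
  set σ₀ : K →ₐ[ℚ] ℂ := (Complex.ofRealAm.restrictScalars ℚ).comp K.val with hσ₀
  haveI : Nonempty (K →ₐ[ℚ] ℂ) := ⟨σ₀⟩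
  set S : ℝ := Finset.univ.sup' Finset.univ_nonempty
    (fun σ : K →ₐ[ℚ] ℂ => ‖σ θ‖) with hS
  have hS0 : 0 ≤ S :=
    le_trans (norm_nonneg _)
      (Finset.le_sup' (f := fun σ : K →ₐ[ℚ] ℂ => ‖σ θ‖) (Finset.mem_univ σ₀))
  have hm2 : (1:ℝ) ≤ (m:ℝ)^2 := by
    have : (1:ℤ) ≤ m^2 := by
      have := Int.one_le_abs hm0; nlinarith [this, sq_abs m]
    exact_mod_cast this
  set C : ℝ := (m:ℝ)^2 * (1 + S + S^2) with hC
  have hC1 : 1 ≤ C := by nlinarith [hS0, hm2, sq_nonneg S]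
  set D : ℕ := Fintype.card (K →ₐ[ℚ] ℂ) with hD
  refine ⟨1 / ((m:ℝ)^2 * C^D), by positivity, D, ?_⟩
  intro p q r hpqr H hH hp hq hr
  set γ : K := (p:K) + (q:K) * θ + (r:K) * θ^2 with hγ
  have hγ0 : γ ≠ 0 := hnv p q r hpqr
  have hmK : ((m:K)) ≠ 0 := by exact_mod_cast hm0
  set δ : K := (m:K)^2 * γ with hδ
  have hδ0 : δ ≠ 0 := mul_ne_zero (pow_ne_zero _ hmK) hγ0
  have hδint : IsIntegral ℤ δ := by
    have h1 : δ = (algebraMap ℤ K (m^2*p)) + (algebraMap ℤ K (m*q)) * ((m:K)*θ)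
        + (algebraMap ℤ K r) * ((m:K)*θ)^2 := by
      rw [hδ, hγ]; simp only [eq_intCast]; push_cast; ring
    rw [h1]
    exact ((isIntegral_algebraMap.add (isIntegral_algebraMap.mul hmθ)).add
      (isIntegral_algebraMap.mul (hmθ.pow 2)))
  haveI : Algebra.IsSeparable ℚ K := inferInstance
  have hnormint : IsIntegral ℤ (Algebra.norm ℚ δ) := Algebra.isIntegral_norm ℚ hδint
  obtain ⟨z, hz⟩ := IsIntegrallyClosed.isIntegral_iff.mp hnormint
  have hz0 : z ≠ 0 := by
    intro h
    apply (Algebra.norm_ne_zero_iff (R := ℚ) (S := K)).mpr hδ0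
    rw [← hz, h]; simp
  have h1le : (1:ℝ) ≤ ‖(algebraMap ℚ ℂ) (Algebra.norm ℚ δ)‖ := by
    rw [show (algebraMap ℚ ℂ) (Algebra.norm ℚ δ) = ((Algebra.norm ℚ δ : ℚ) : ℂ) from rfl,
      ← hz]
    simp only [eq_intCast]
    push_cast
    exact_mod_cast Int.one_le_abs hz0
  have hprod : ‖(algebraMap ℚ ℂ) (Algebra.norm ℚ δ)‖
      = ∏ σ : K →ₐ[ℚ] ℂ, ‖σ δ‖ := by
    rw [Algebra.norm_eq_prod_embeddings]
    exact norm_prod _ _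
  -- bound each embedding
  have hσbound : ∀ σ : K →ₐ[ℚ] ℂ, ‖σ δ‖ ≤ C * H := by
    intro σ
    have hθσ : ‖σ θ‖ ≤ S :=
      Finset.le_sup' (f := fun σ : K →ₐ[ℚ] ℂ => ‖σ θ‖) (Finset.mem_univ σ)
    have hθσ0 : 0 ≤ ‖σ θ‖ := norm_nonneg _
    have hδσ : σ δ = (m:ℂ)^2 * ((p:ℂ) + (q:ℂ) * σ θ + (r:ℂ) * (σ θ)^2) := by
      rw [hδ, hγ]
      push_cast [map_add, _root_.map_mul, map_pow, map_intCast]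
      ring
    rw [hδσ, norm_mul, norm_pow, Complex.norm_intCast]
    have h2 : ‖(p:ℂ) + (q:ℂ) * σ θ + (r:ℂ) * (σ θ)^2‖
        ≤ H * (1 + S + S^2) := by
      calc ‖(p:ℂ) + (q:ℂ) * σ θ + (r:ℂ) * (σ θ)^2‖
          ≤ ‖(p:ℂ) + (q:ℂ) * σ θ‖ + ‖(r:ℂ) * (σ θ)^2‖ :=
            norm_add_le _ _
        _ ≤ ‖(p:ℂ)‖ + ‖(q:ℂ) * σ θ‖
            + ‖(r:ℂ) * (σ θ)^2‖ := by
            have := norm_add_le ((p:ℂ)) ((q:ℂ) * σ θ); linarith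
        _ ≤ H * (1 + S + S^2) := by
            rw [norm_mul, norm_mul, norm_pow, Complex.norm_intCast,
              Complex.norm_intCast, Complex.norm_intCast]
            have hq' : |(q:ℝ)| * ‖σ θ‖ ≤ H * S := by
              apply mul_le_mul hq hθσ hθσ0 (by linarith)
            have hr' : |(r:ℝ)| * (‖σ θ‖)^2 ≤ H * S^2 := by
              apply mul_le_mul hr (by nlinarith) (by positivity) (by linarith)
            nlinarith [abs_nonneg ((p:ℝ))]
    calc |(m:ℝ)|^2 * ‖(p:ℂ) + (q:ℂ) * σ θ + (r:ℂ) * (σ θ)^2‖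
        ≤ |(m:ℝ)|^2 * (H * (1 + S + S^2)) := by
          apply mul_le_mul_of_nonneg_left h2 (by positivity)
      _ = C * H := by rw [hC, sq_abs]; ring
  have hCH1 : (1:ℝ) ≤ C * H := one_le_mul_of_one_le_of_one_le hC1 hH
  -- peel off σ₀
  have hsplit : (∏ σ : K →ₐ[ℚ] ℂ, ‖σ δ‖)
      = ‖σ₀ δ‖ * ∏ σ ∈ Finset.univ.erase σ₀, ‖σ δ‖ :=
    (Finset.mul_prod_erase Finset.univ _ (Finset.mem_univ σ₀)).symm
  have hrest : (∏ σ ∈ Finset.univ.erase σ₀, ‖σ δ‖) ≤ (C * H)^D := by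
    calc (∏ σ ∈ Finset.univ.erase σ₀, ‖σ δ‖)
        ≤ ∏ _σ ∈ Finset.univ.erase σ₀, (C * H) :=
          Finset.prod_le_prod (fun σ _ => norm_nonneg _) (fun σ _ => hσbound σ)
      _ = (C * H) ^ (Finset.univ.erase σ₀).card := Finset.prod_const _
      _ ≤ (C * H) ^ D := by
          apply pow_le_pow_right₀ hCH1
          calc (Finset.univ.erase σ₀).card ≤ Finset.univ.card :=
                Finset.card_le_card (Finset.erase_subset _ _)
            _ = D := Finset.card_univ.trans hD.symm
  have key : (1:ℝ) ≤ ‖σ₀ δ‖ * (C * H)^D := by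
    calc (1:ℝ) ≤ ‖(algebraMap ℚ ℂ) (Algebra.norm ℚ δ)‖ := h1le
      _ = ‖σ₀ δ‖ * ∏ σ ∈ Finset.univ.erase σ₀, ‖σ δ‖ := by
          rw [hprod, hsplit]
      _ ≤ ‖σ₀ δ‖ * (C * H)^D :=
          mul_le_mul_of_nonneg_left hrest (norm_nonneg _)
  -- compute σ₀ δ
  have hσ₀θ : σ₀ θ = (α : ℂ) := by
    have hcoe : (θ : ℝ) = α := IntermediateField.AdjoinSimple.algebraMap_gen ℚ α
    rw [hσ₀]
    exact congrArg Complex.ofReal hcoe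
  have hσ₀δ : ‖σ₀ δ‖ = (m:ℝ)^2 * |(p:ℝ) + q * α + r * α^2| := by
    have : σ₀ δ = (((m:ℝ)^2 * ((p:ℝ) + q * α + r * α^2) : ℝ) : ℂ) := by
      rw [hδ, hγ]
      push_cast [map_add, _root_.map_mul, map_pow, map_intCast, hσ₀θ]
      ring
    rw [this, Complex.norm_real, Real.norm_eq_abs, abs_mul, abs_of_nonneg (by positivity : (0:ℝ) ≤ (m:ℝ)^2)]
  -- conclude
  have hHD : (0:ℝ) < H ^ D := by positivity
  rw [div_div, div_le_iff₀ (by positivity)]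
  have expand : ‖σ₀ δ‖ * (C*H)^D
      = |(p:ℝ) + q * α + r * α^2| * ((m:ℝ)^2 * C^D * H^D) := by
    rw [hσ₀δ, mul_pow]; ring
  rw [expand] at key
  exact key

lemma affine_div_rpow (k s a b : ℝ) (hk : 1 < k) (hs : 0 < s) :
    Filter.Tendsto (fun N : ℕ => (a + b * N) / (s * (N:ℝ)^k)) Filter.atTop (nhds 0) := by
  have h1 : Filter.Tendsto (fun N : ℕ => (N:ℝ) ^ (-k)) Filter.atTop (nhds 0) :=
    (tendsto_rpow_neg_atTop (by linarith)).comp tendsto_natCast_atTop_atTop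
  have h2 : Filter.Tendsto (fun N : ℕ => (N:ℝ) ^ (1-k)) Filter.atTop (nhds 0) := by
    have := (tendsto_rpow_neg_atTop (by linarith : 0 < k - 1)).comp
      (tendsto_natCast_atTop_atTop (R := ℝ))
    simpa [neg_sub, Function.comp_def] using this
  have h3 : Filter.Tendsto (fun N : ℕ => (a/s) * (N:ℝ)^(-k) + (b/s) * (N:ℝ)^(1-k))
      Filter.atTop (nhds 0) := by
    have := (h1.const_mul (a/s)).add (h2.const_mul (b/s))
    simpa using this
  apply h3.congr'
  filter_upwards [Filter.eventually_ge_atTop 1] with N hN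
  have hN0 : (0:ℝ) < N := by exact_mod_cast hN
  have hNk : (0:ℝ) < (N:ℝ)^k := Real.rpow_pos_of_pos hN0 k
  have hNk' : (N:ℝ)^k ≠ 0 := ne_of_gt hNk
  rw [Real.rpow_neg hN0.le, Real.rpow_sub hN0, Real.rpow_one]
  field_simp
  try ring


set_option maxHeartbeats 2000000 in
/-- If `α` is a real algebraic number of degree at least three over `ℚ`, then the
pair `(α, α²)` has `k`-free energy limit equal to zero for every `k > 1`
(taking `s > 2`). -/
theorem algebraic_square_pair_k_free_energy_limit_zero (α : ℝ)
    (hα : IsAlgebraic ℚ α) (hdeg : 3 ≤ (minpoly ℚ α).natDegree) :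
    ∀ k : ℝ, 1 < k → ∀ s : ℝ, 2 < s →
      Filter.Tendsto (fun N : ℕ => Real.log (Z N α (α ^ 2) s) / (s * (N : ℝ) ^ k))
        Filter.atTop (nhds 0) := by
  intro k hk s hs
  have hs0 : (0:ℝ) < s := by linarith
  obtain ⟨c, hc, D, hliou⟩ := liouville3 α hα hdeg
  set u : ℝ := 1 + |α| + |α|^2 with hu
  have hu1 : (1:ℝ) ≤ u := by nlinarith [abs_nonneg α, sq_nonneg |α|]
  -- bounds on |HS| for each state
  have key : ∀ (N : ℕ) (I : Fin N → Fin 2),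
      c / ((2:ℝ)^N)^D ≤ |HS (Mmat α (α^2)) (AI I)| ∧
      |HS (Mmat α (α^2)) (AI I)| ≤ u * 2^N := by
    intro N I
    set p := BI I 0 2 with hp'
    set q := BI I 1 2 with hq'
    set r := BI I 2 2 with hr'
    have hval : HS (Mmat α (α^2)) (AI I) = (p:ℝ) + q*α + r*α^2 := by
      rw [AI_eq, HS_formula]
      simp only [Matrix.map_apply]
      ring
    have hb : ∀ i, |((BI I i 2 : ℤ) : ℝ)| ≤ (2:ℝ)^N := by
      intro i
      have h := BI_bound I i 2
      calc |((BI I i 2 : ℤ) : ℝ)| = ((|BI I i 2| : ℤ) : ℝ) := by push_cast; rfl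
        _ ≤ (((2:ℤ)^N : ℤ) : ℝ) := by exact_mod_cast h
        _ = (2:ℝ)^N := by push_cast; rfl
    have hnz : ¬(p = 0 ∧ q = 0 ∧ r = 0) := by
      rintro ⟨h1, h2, h3⟩
      exact BI_col_ne_zero I (fun i => by fin_cases i <;> assumption)
    have h2N : (1:ℝ) ≤ (2:ℝ)^N := one_le_pow₀ (by norm_num)
    constructor
    · rw [hval]
      exact hliou p q r hnz ((2:ℝ)^N) h2N (hb 0) (hb 1) (hb 2)
    · rw [hval]
      have t1 := abs_add_le ((p:ℝ) + (q:ℝ)*α) ((r:ℝ)*α^2)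
      have t2 := abs_add_le (p:ℝ) ((q:ℝ)*α)
      have e1 : |(q:ℝ)*α| = |(q:ℝ)| *|α| := abs_mul _ _
      have e2 : |(r:ℝ)*α^2| = |(r:ℝ)| *|α|^2 := by rw [abs_mul, abs_pow]
      have hbp := hb 0
      have hbq := hb 1
      have hbr := hb 2
      have m1 : |(q:ℝ)| *|α| ≤ (2:ℝ)^N * |α| :=
        mul_le_mul_of_nonneg_right hbq (abs_nonneg α)
      have m2 : |(r:ℝ)| *|α|^2 ≤ (2:ℝ)^N * |α|^2 :=
        mul_le_mul_of_nonneg_right hbr (by positivity)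
      rw [hu]
      calc |(p:ℝ) + q*α + r*α^2| ≤ |(p:ℝ) + (q:ℝ)*α| + |(r:ℝ)*α^2| := t1
        _ ≤ |(p:ℝ)| + |(q:ℝ)*α| + |(r:ℝ)*α^2| := by linarith
        _ ≤ (2:ℝ)^N + (2:ℝ)^N*|α| + (2:ℝ)^N*|α|^2 := by
            rw [e1, e2]; linarith
        _ = (1 + |α| + |α|^2) * 2^N := by ring
  have hLpos : ∀ N : ℕ, (0:ℝ) < c / ((2:ℝ)^N)^D := by
    intro N; positivity
  have hHSpos : ∀ (N : ℕ) (I : Fin N → Fin 2), 0 < |HS (Mmat α (α^2)) (AI I)| := by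
    intro N I
    exact lt_of_lt_of_le (hLpos N) (key N I).1
  have hcard : ∀ N : ℕ, (Finset.univ : Finset (Fin N → Fin 2)).card = 2^N := by
    intro N
    rw [Finset.card_univ]
    simp [Fintype.card_fun]
  -- upper bound on Z
  have hZub : ∀ N : ℕ, Z N α (α^2) s ≤ (2:ℝ)^N * (1 / (c / ((2:ℝ)^N)^D)^s) := by
    intro N
    rw [Z]
    calc (∑ I : Fin N → Fin 2, 1 / |HS (Mmat α (α^2)) (AI I)| ^ s)
        ≤ ∑ _I : Fin N → Fin 2, 1 / (c / ((2:ℝ)^N)^D)^s := by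
          apply Finset.sum_le_sum
          intro I _
          apply one_div_le_one_div_of_le (Real.rpow_pos_of_pos (hLpos N) s)
          exact Real.rpow_le_rpow (hLpos N).le (key N I).1 hs0.le
      _ = (2:ℝ)^N * (1 / (c / ((2:ℝ)^N)^D)^s) := by
          rw [Finset.sum_const, hcard, nsmul_eq_mul]
          push_cast
          ring
  -- lower bound on Z
  have hZlb : ∀ N : ℕ, 1 / (u * (2:ℝ)^N)^s ≤ Z N α (α^2) s := by
    intro N
    have hW : (0:ℝ) < u * (2:ℝ)^N := by positivity
    have step : ((2:ℝ)^N) * (1 / (u * (2:ℝ)^N)^s) ≤ Z N α (α^2) s := by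
      rw [Z]
      calc ((2:ℝ)^N) * (1 / (u * (2:ℝ)^N)^s)
          = ∑ _I : Fin N → Fin 2, 1 / (u * (2:ℝ)^N)^s := by
            rw [Finset.sum_const, hcard, nsmul_eq_mul]
            push_cast
            ring
        _ ≤ ∑ I : Fin N → Fin 2, 1 / |HS (Mmat α (α^2)) (AI I)| ^ s := by
            apply Finset.sum_le_sum
            intro I _
            apply one_div_le_one_div_of_le
              (Real.rpow_pos_of_pos (hHSpos N I) s)
            exact Real.rpow_le_rpow (abs_nonneg _) (key N I).2 hs0.le
    have hpos : (0:ℝ) < 1 / (u * (2:ℝ)^N)^s := by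
      have := Real.rpow_pos_of_pos hW s
      positivity
    have h2N : (1:ℝ) ≤ (2:ℝ)^N := one_le_pow₀ (by norm_num)
    nlinarith [step, hpos, h2N]
  have hZpos : ∀ N : ℕ, 0 < Z N α (α^2) s := by
    intro N
    have hW : (0:ℝ) < u * (2:ℝ)^N := by positivity
    have := Real.rpow_pos_of_pos hW s
    exact lt_of_lt_of_le (by positivity) (hZlb N)
  -- logarithmic bounds
  have hlogub : ∀ N : ℕ, Real.log (Z N α (α^2) s)
      ≤ (-s*Real.log c) + (Real.log 2 + s*D*Real.log 2)*N := by
    intro N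
    have h2 : (0:ℝ) < (2:ℝ)^N := by positivity
    have hL := hLpos N
    have hLs : (0:ℝ) < (c / ((2:ℝ)^N)^D)^s := Real.rpow_pos_of_pos hL s
    have hlog := Real.log_le_log (hZpos N) (hZub N)
    rw [Real.log_mul (ne_of_gt h2) (by positivity), one_div, Real.log_inv,
      Real.log_rpow hL, Real.log_div (ne_of_gt hc) (by positivity),
      Real.log_pow] at hlog
    simp only [Real.log_pow] at hlog
    calc Real.log (Z N α (α^2) s) ≤ _ := hlog
      _ = (-s*Real.log c) + (Real.log 2 + s*D*Real.log 2)*N := by push_cast; ring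
  have hloglb : ∀ N : ℕ,
      (-s*Real.log u) + (-s*Real.log 2)*N ≤ Real.log (Z N α (α^2) s) := by
    intro N
    have hW : (0:ℝ) < u * (2:ℝ)^N := by positivity
    have hlog := Real.log_le_log (by positivity) (hZlb N)
    rw [one_div, Real.log_inv, Real.log_rpow hW, Real.log_mul (by positivity)
      (by positivity), Real.log_pow] at hlog
    calc (-s*Real.log u) + (-s*Real.log 2)*N
        = -(s * (Real.log u + N * Real.log 2)) := by push_cast; ring
      _ ≤ Real.log (Z N α (α^2) s) := hlog
  -- squeeze
  have hsq := tendsto_of_tendsto_of_tendsto_of_le_of_le'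
    (affine_div_rpow k s (-s*Real.log u) (-s*Real.log 2) hk hs0)
    (affine_div_rpow k s (-s*Real.log c) (Real.log 2 + s*D*Real.log 2) hk hs0)
    (f := fun N : ℕ => Real.log (Z N α (α ^ 2) s) / (s * (N : ℝ) ^ k))
    ?_ ?_
  · exact hsq
  · filter_upwards [Filter.eventually_ge_atTop 1] with N hN
    have hN0 : (0:ℝ) < N := by exact_mod_cast hN
    have hden : (0:ℝ) < s * (N:ℝ)^k := by positivity
    have := hloglb N
    gcongr
  · filter_upwards [Filter.eventually_ge_atTop 1] with N hN
    have hN0 : (0:ℝ) < N := by exact_mod_cast hN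
    have hden : (0:ℝ) < s * (N:ℝ)^k := by positivity
    have := hlogub N
    gcongr

end
end

section
/- Let (α, β) ∈ △ have non-terminating triangle sequence (a₀, a₁, …). For each k ≥ 0 set N_k = a₀ + a₁ + ⋯ + a_k + (k+1) and let I = (1^{a₀}, 0, 1^{a₁}, 0, …, 1^{a_k}, 0) ∈ {0,1}^{N_k} be the binary string consisting of a₀ ones, a zero, a₁ ones, a zero, and so on. Then M*A^I = d_k, i.e. Tr(M (A^I)ᵀ) = (1, α, β)·C_k. -/
open Matrix Filter

noncomputable section

/-- The triangle `△ = {(x,y) : 1 ≥ x ≥ y > 0}`. -/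
def tri : Set (ℝ × ℝ) := {p | 1 ≥ p.1 ∧ p.1 ≥ p.2 ∧ p.2 > 0}

/-- The subtriangle `△_k = {(x,y) ∈ △ : 1 − x − ky ≥ 0 > 1 − x − (k+1)y}`. -/
def triSub (k : ℕ) : Set (ℝ × ℝ) :=
  {p | p ∈ tri ∧ 1 - p.1 - (k : ℝ) * p.2 ≥ 0 ∧ 0 > 1 - p.1 - ((k : ℝ) + 1) * p.2}

/-- The index `k` with `(x,y) ∈ △_k`, i.e. `⌊(1-x)/y⌋`. -/
def triIndex (p : ℝ × ℝ) : ℤ := ⌊(1 - p.1) / p.2⌋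

/-- The triangle map `T`, sending `(α, β) ∈ △_k` to `(β/α, (1 − α − kβ)/α)`. -/
def T (p : ℝ × ℝ) : ℝ × ℝ :=
  (p.2 / p.1, (1 - p.1 - (triIndex p : ℝ) * p.2) / p.1)

/-- The vectors `C_k` (with indices shifted by 3):
`Cvec a 0 = C₋₃`, `Cvec a 1 = C₋₂`, `Cvec a 2 = C₋₁`, `Cvec a (k+3) = C_k`. -/
def Cvec (a : ℕ → ℕ) : ℕ → Fin 3 → ℝ
  | 0 => ![1, 0, 0]
  | 1 => ![0, 1, 0]
  | 2 => ![0, 0, 1]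
  | (n + 3) => Cvec a n - Cvec a (n + 1) - (a n : ℝ) • Cvec a (n + 2)

/-- `d_k = (1, α, β) · C_k`, with the index shifted by 3: `dvec a α β (k+3) = d_k`. -/
def dvec (a : ℕ → ℕ) (α β : ℝ) (n : ℕ) : ℝ := ![1, α, β] ⬝ᵥ Cvec a n

/-- The binary string `(1^{a₀}, 0, 1^{a₁}, 0, …, 1^{a_k}, 0)`:
`a₀` ones, a zero, `a₁` ones, a zero, and so on. -/
def bitString (a : ℕ → ℕ) (k : ℕ) : List (Fin 2) :=
  (List.ofFn fun j : Fin (k + 1) => List.replicate (a j) (1 : Fin 2) ++ [(0 : Fin 2)]).flatten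


lemma repl_prod (m : ℕ) : (List.replicate m (Amat 1)).prod = !![1,0,0;0,1,0;-(m:ℝ),0,1] := by
  induction m with
  | zero => simp [Matrix.one_fin_three]
  | succ n ih =>
    rw [List.replicate_succ, List.prod_cons, ih]
    show Amat 1 * _ = _
    simp [Amat, A1, Matrix.mul_fin_three]

lemma block_prod (m : ℕ) :
    ((List.replicate m (1 : Fin 2) ++ [(0 : Fin 2)]).map Amat).prod
      = !![0,0,1; 1,0,-1; 0,1,-(m:ℝ)] := by
  rw [List.map_append, List.prod_append, List.map_replicate, repl_prod]
  simp only [List.map_cons, List.map_nil, List.prod_cons, List.prod_nil, mul_one]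
  simp [Amat, A0, Matrix.mul_fin_three]

lemma bitString_succ' (a : ℕ → ℕ) (k : ℕ) :
    bitString a (k + 1) = bitString a k ++
      (List.replicate (a (k + 1)) (1 : Fin 2) ++ [(0 : Fin 2)]) := by
  unfold bitString
  rw [List.ofFn_succ']
  simp

lemma bitString_zero' (a : ℕ → ℕ) :
    bitString a 0 = List.replicate (a 0) (1 : Fin 2) ++ [(0 : Fin 2)] := by
  unfold bitString; simp

lemma Cvec_add3 (a : ℕ → ℕ) (n : ℕ) :
    Cvec a (n + 3) = Cvec a n - Cvec a (n + 1) - (a n : ℝ) • Cvec a (n + 2) := rfl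

lemma col_prod (a : ℕ → ℕ) (k : ℕ) (i : Fin 3) :
    ((bitString a k).map Amat).prod i 0 = Cvec a (k + 1) i ∧
    ((bitString a k).map Amat).prod i 1 = Cvec a (k + 2) i ∧
    ((bitString a k).map Amat).prod i 2 = Cvec a (k + 3) i := by
  induction k with
  | zero =>
    have h3 : Cvec a 3 = Cvec a 0 - Cvec a 1 - ((a 0 : ℕ) : ℝ) • Cvec a 2 := Cvec_add3 a 0
    rw [bitString_zero', block_prod]
    fin_cases i <;> simp [h3, Cvec]
  | succ n ih =>
    obtain ⟨h0, h1, h2⟩ := ih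
    have hC : ∀ j, Cvec a (n + 1 + 3) j
        = Cvec a (n + 1) j - Cvec a (n + 2) j - ((a (n + 1) : ℕ) : ℝ) * Cvec a (n + 3) j := by
      intro j
      rw [Cvec_add3 a (n + 1)]
      simp [Pi.sub_apply, Pi.smul_apply]
    rw [bitString_succ', List.map_append, List.prod_append, block_prod]
    simp only [Matrix.mul_apply, Fin.sum_univ_three, h0, h1, h2, hC]
    set c := Cvec a n i
    set x0 := Cvec a (n + 1) i
    set x1 := Cvec a (n + 2) i
    set x2 := Cvec a (n + 3) i
    set y := ((a (n + 1) : ℕ) : ℝ)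
    refine ⟨?_, ?_, ?_⟩ <;> simp <;> ring

lemma bitString_length (a : ℕ → ℕ) (k : ℕ) :
    (bitString a k).length = (∑ j ∈ Finset.range (k + 1), a j) + (k + 1) := by
  unfold bitString
  rw [List.length_flatten, List.map_ofFn, List.sum_ofFn]
  simp [Function.comp, Finset.sum_add_distrib, ← Fin.sum_univ_eq_sum_range]

/-- For `(α, β) ∈ △` with non-terminating triangle sequence `(a₀, a₁, …)`, the
string `I = (1^{a₀}, 0, …, 1^{a_k}, 0)` has length `N_k = a₀ + ⋯ + a_k + (k+1)`
and satisfies `M*A^I = Tr(M (A^I)ᵀ) = d_k = (1, α, β)·C_k`. -/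
theorem HS_bitString_eq_d (α β : ℝ) (a : ℕ → ℕ)
    (hseq : ∀ n : ℕ, T^[n] (α, β) ∈ triSub (a n)) (k : ℕ) :
    (bitString a k).length = (∑ j ∈ Finset.range (k + 1), a j) + (k + 1) ∧
    HS (Mmat α β) ((bitString a k).map Amat).prod = dvec a α β (k + 3) := by
  refine ⟨bitString_length a k, ?_⟩
  obtain ⟨-, -, e0⟩ := col_prod a k 0
  obtain ⟨-, -, e1⟩ := col_prod a k 1
  obtain ⟨-, -, e2⟩ := col_prod a k 2
  simp [HS, Mmat, Matrix.trace_fin_three, Matrix.mul_apply, Matrix.vecMul,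
    dotProduct, Fin.sum_univ_three, e0, e1, e2, dvec]

end
end
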